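/- Let G be a graph of order n > 2 with m edges, and suppose the second largest vertex degree Δ₂ satisfies Δ₂ < 2m/n. Let k (2 ≤ k ≤ n) be the largest positive integer such that d₂ = d₃ = ⋯ = d_k = Δ₂. Then Δ₁ > Δ₂ + n - k. -/

import Mathlib

open Finset

/-- The `k`-th largest element (1-indexed) of a multiset of naturals, with default `0`. -/
def kthLargestN (s : Multiset ℕ) (k : ℕ) : ℕ :=
  (s.sort (· ≤ ·)).reverse.getD (k - 1) 0

/-- `degSeq G k` is the `k`-th largest vertex degree (1-indexed) of `G`,
so `degSeq G 1 = Δ₁` and `degSeq G 2 = Δ₂`. -/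
def degSeq {n : ℕ} (G : SimpleGraph (Fin n)) [DecidableRel G.Adj] (k : ℕ) : ℕ :=
  kthLargestN (Finset.univ.val.map (fun v => G.degree v)) k

lemma sum_range_getD (l : List ℕ) : ∑ i ∈ Finset.range l.length, l.getD i 0 = l.sum := by
  induction l with
  | nil => simp
  | cons a t ih =>
    rw [List.length_cons, Finset.sum_range_succ']
    simp only [List.getD_cons_succ, List.getD_cons_zero, ih, List.sum_cons]
    omega

lemma degSeq_length {n : ℕ} (G : SimpleGraph (Fin n)) [DecidableRel G.Adj] :
    ((Finset.univ.val.map (fun v => G.degree v)).sort (· ≤ ·)).reverse.length = n := by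
  simp

lemma degSeq_sum {n : ℕ} (G : SimpleGraph (Fin n)) [DecidableRel G.Adj] :
    ∑ i ∈ Finset.Icc 1 n, degSeq G i = 2 * G.edgeFinset.card := by
  have h1 : ∑ i ∈ Finset.Icc 1 n, degSeq G i
      = ∑ i ∈ Finset.range n, degSeq G (1 + i) := by
    rw [← Finset.Ico_add_one_right_eq_Icc, Finset.sum_Ico_eq_sum_range]
    simp [Nat.add_comm]
  set L := ((Finset.univ.val.map (fun v => G.degree v)).sort (· ≤ ·)).reverse with hL
  have hlen : L.length = n := degSeq_length G
  have h2 : ∀ i, degSeq G (1 + i) = L.getD i 0 := by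
    intro i
    simp [degSeq, kthLargestN, hL]
  rw [h1]
  simp_rw [h2]
  have h3 : ∑ x ∈ Finset.range n, L.getD x 0 = L.sum := by
    conv_lhs => rw [← hlen]
    exact sum_range_getD L
  rw [h3, hL, List.sum_reverse]
  rw [← Multiset.sum_coe, Multiset.sort_eq]
  have := SimpleGraph.sum_degrees_eq_twice_card_edges G
  simpa [Finset.sum] using this

lemma degSeq_anti {n : ℕ} (G : SimpleGraph (Fin n)) [DecidableRel G.Adj] {i j : ℕ}
    (hi : 1 ≤ i) (hij : i ≤ j) : degSeq G j ≤ degSeq G i := by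
  set L := ((Finset.univ.val.map (fun v => G.degree v)).sort (· ≤ ·)).reverse with hL
  have hsorted : L.Pairwise (fun a b => b ≤ a) := by
    have := Multiset.pairwise_sort (r := (· ≤ ·)) (s := Finset.univ.val.map (fun v => G.degree v))
    simpa [hL, List.pairwise_reverse] using this
  show L.getD (j-1) 0 ≤ L.getD (i-1) 0
  by_cases hj : j - 1 < L.length
  · have hi' : i - 1 < L.length := lt_of_le_of_lt (by omega) hj
    rw [List.getD_eq_getElem _ _ hj, List.getD_eq_getElem _ _ hi']
    rcases eq_or_lt_of_le (show i - 1 ≤ j - 1 by omega) with heq | hlt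
    · simp [heq]
    · exact hsorted.rel_get_of_lt (by exact hlt)
  · rw [List.getD_eq_default _ _ (by omega)]
    exact Nat.zero_le _

/-- Let `G` be a graph of order `n > 2` with `m` edges, `Δ₂ < 2m/n`, and
let `k` (`2 ≤ k ≤ n`) be the largest positive integer with `d₂ = ⋯ = d_k = Δ₂`.
Then `Δ₁ > Δ₂ + n - k`. -/
theorem stmt2 {n k : ℕ} (hn : 2 < n) (G : SimpleGraph (Fin n)) [DecidableRel G.Adj]
    (h : (degSeq G 2 : ℝ) < 2 * (G.edgeFinset.card : ℝ) / n)
    (hk : IsGreatest {j | 2 ≤ j ∧ j ≤ n ∧ ∀ i, 2 ≤ i → i ≤ j → degSeq G i = degSeq G 2} k) :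
    (degSeq G 1 : ℝ) > (degSeq G 2 : ℝ) + (n : ℝ) - (k : ℝ) := by
  obtain ⟨⟨hk2, hkn, hkeq⟩, hkmax⟩ := hk
  -- n * D2 < 2m
  have hnpos : (0:ℝ) < (n:ℝ) := by exact_mod_cast Nat.zero_lt_of_lt hn
  have hm : degSeq G 2 * n < 2 * G.edgeFinset.card := by
    have := (lt_div_iff₀ hnpos).mp h
    exact_mod_cast this
  -- strict drop after k
  have hdrop : ∀ i ∈ Finset.Ioc k n, degSeq G i + 1 ≤ degSeq G 2 := by
    intro i hi
    rw [Finset.mem_Ioc] at hi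
    have hk1n : k + 1 ≤ n := by omega
    have hne : degSeq G (k+1) ≠ degSeq G 2 := by
      intro heq
      have hmem : k + 1 ∈ {j | 2 ≤ j ∧ j ≤ n ∧
          ∀ i, 2 ≤ i → i ≤ j → degSeq G i = degSeq G 2} := by
        refine ⟨by omega, hk1n, fun j hj1 hj2 => ?_⟩
        rcases eq_or_lt_of_le hj2 with rfl | hlt
        · exact heq
        · exact hkeq j hj1 (by omega)
      have := hkmax hmem
      omega
    have hle : degSeq G (k+1) ≤ degSeq G 2 := degSeq_anti G (by omega) (by omega)
    have h2 := degSeq_anti G (show 1 ≤ k+1 by omega) (show k+1 ≤ i by omega)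
    omega
  -- split the sum
  have hsum := degSeq_sum G
  have e1 : Finset.Icc 1 n = Finset.Ioc 0 n := by rw [← Finset.Icc_add_one_left_eq_Ioc]; rfl
  have hsplit : ∑ i ∈ Finset.Ioc 0 1, degSeq G i + ∑ i ∈ Finset.Ioc 1 k, degSeq G i
      + ∑ i ∈ Finset.Ioc k n, degSeq G i = 2 * G.edgeFinset.card := by
    rw [Finset.sum_Ioc_consecutive _ (by omega : (0:ℕ) ≤ 1) (by omega : 1 ≤ k),
      Finset.sum_Ioc_consecutive _ (by omega : (0:ℕ) ≤ k) hkn]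
    rw [← e1]; exact hsum
  have hs1 : ∑ i ∈ Finset.Ioc 0 1, degSeq G i = degSeq G 1 := by
    simp
  have hs2 : ∑ i ∈ Finset.Ioc 1 k, degSeq G i = (k - 1) * degSeq G 2 := by
    have hc : ∑ i ∈ Finset.Ioc 1 k, degSeq G i
        = ∑ _i ∈ Finset.Ioc 1 k, degSeq G 2 :=
      Finset.sum_congr rfl (fun i hi => by
        rw [Finset.mem_Ioc] at hi
        exact hkeq i (by omega) hi.2)
    rw [hc, Finset.sum_const, Nat.card_Ioc, smul_eq_mul]
  have hs3 : ∑ i ∈ Finset.Ioc k n, degSeq G i + (n - k)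
      ≤ (n - k) * degSeq G 2 := by
    have : ∑ i ∈ Finset.Ioc k n, (degSeq G i + 1)
        ≤ ∑ _i ∈ Finset.Ioc k n, degSeq G 2 := Finset.sum_le_sum hdrop
    rw [Finset.sum_add_distrib, Finset.sum_const, Finset.sum_const, Nat.card_Ioc,
      smul_eq_mul, smul_eq_mul, mul_one] at this
    exact this
  -- combine
  have hmul : (k-1) * degSeq G 2 + (n-k) * degSeq G 2 = (n-1) * degSeq G 2 := by
    rw [← Nat.add_mul]; congr 1; omega
  have hnmul : n * degSeq G 2 = degSeq G 2 + (n-1) * degSeq G 2 := by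
    rcases n with _ | n'
    · omega
    · simp [Nat.succ_sub_one]; ring
  have hm' : n * degSeq G 2 < 2 * G.edgeFinset.card := by rwa [mul_comm] at hm
  have hfinal : degSeq G 2 + (n - k) < degSeq G 1 := by
    rw [hs1, hs2] at hsplit
    linarith
  have hcast : ((n - k : ℕ) : ℝ) = (n:ℝ) - (k:ℝ) := by
    exact Nat.cast_sub hkn
  have : ((degSeq G 2 + (n - k) : ℕ) : ℝ) < (degSeq G 1 : ℝ) := by exact_mod_cast hfinal
  push_cast at this
  rw [hcast] at this
  linarith
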